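/- arXiv:1704.08582 — 2 statements merged into one kernel-verified Lean document; each statement's English description precedes it below -/
import Mathlib

section
/- Let m ≥ 1, let Ωₙ (n ∈ ℕ) and Ω be nonempty bounded open convex subsets of ℝ^m, and suppose the Hausdorff distance between the closure of Ωₙ and the closure of Ω tends to 0 as n → ∞. If K ⊆ Ω is compact, then K ⊆ Ωₙ for all sufficiently large n. -/
open Filter Metric Set

/-- For an open convex nonempty set, the interior of the closure is contained in the set. -/
lemma aux_interior_closure_subset {E : Type*} [NormedAddCommGroup E] [NormedSpace ℝ E]
    {s : Set E} (hs : Convex ℝ s) (ho : IsOpen s) (hne : s.Nonempty) :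
    interior (closure s) ⊆ s := by
  intro x hx
  obtain ⟨p, hp⟩ := hne
  have hpi : p ∈ interior s := by rwa [ho.interior_eq]
  have hfc : Continuous (fun η : ℝ => x + η • (x - p)) := by continuity
  have h0 : (fun η : ℝ => x + η • (x - p)) 0 ∈ interior (closure s) := by simpa
  have hev : ∀ᶠ η in nhds (0 : ℝ), x + η • (x - p) ∈ interior (closure s) :=
    hfc.continuousAt.eventually_mem (isOpen_interior.mem_nhds h0)
  have hev' : ∀ᶠ η in nhdsWithin (0 : ℝ) (Set.Ioi 0),
      x + η • (x - p) ∈ interior (closure s) ∧ η ∈ Set.Ioi (0:ℝ) :=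
    (hev.filter_mono nhdsWithin_le_nhds).and (eventually_mem_nhdsWithin)
  obtain ⟨η, hmem, hη⟩ := hev'.exists
  have hη' : (0:ℝ) < η := hη
  have h1t : (0:ℝ) < 1 + η := by linarith
  have ha : (0:ℝ) < η / (1 + η) := by positivity
  have hb : (0:ℝ) ≤ 1 / (1 + η) := by positivity
  have hab : η / (1 + η) + 1 / (1 + η) = 1 := by field_simp; ring
  have hcomb := hs.combo_interior_closure_mem_interior hpi
    (interior_subset hmem) ha hb hab
  have heq : (η / (1 + η)) • p + (1 / (1 + η)) • (x + η • (x - p)) = x := by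
    match_scalars <;> field_simp <;> ring
  rw [heq, ho.interior_eq] at hcomb
  exact hcomb

/-- If every point of the ball of radius `r` around `x₀` is within `ε` of a closed convex
nonempty set `C`, then the closed ball of radius `r - ε` is contained in `C`. -/
lemma aux_closedBall_subset {E : Type*} [NormedAddCommGroup E] [NormedSpace ℝ E]
    {C : Set E} (hC : Convex ℝ C) (hcl : IsClosed C) (hCne : C.Nonempty)
    {x₀ : E} {r ε : ℝ} (hr : 0 < r) (hε : 0 < ε) (hεr : ε ≤ r)
    (h : ∀ q, dist q x₀ ≤ r → Metric.infDist q C < ε) :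
    Metric.closedBall x₀ (r - ε) ⊆ C := by
  intro z hz
  by_contra hzC
  obtain ⟨f, u, hfC, hfz⟩ := geometric_hahn_banach_closed_point hC hcl hzC
  set M := ‖f‖ with hM
  have hM0 : 0 ≤ M := norm_nonneg f
  have key : ∀ q, dist q x₀ ≤ r → f q < u + M * ε := by
    intro q hq
    obtain ⟨w, hwC, hwd⟩ := (Metric.infDist_lt_iff hCne).1 (h q hq)
    have h1 : f q - f w ≤ M * dist q w := by
      have h3 : ‖f q - f w‖ ≤ M * ‖q - w‖ := by
        rw [← map_sub]; exact f.le_opNorm _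
      have h2 : f q - f w ≤ ‖f q - f w‖ := le_abs_self _
      rw [dist_eq_norm]; linarith
    have h4 : M * dist q w ≤ M * ε := mul_le_mul_of_nonneg_left hwd.le hM0
    have h5 := hfC w hwC
    linarith
  have hB0 : 0 ≤ u + M * ε - f x₀ := by
    have := key x₀ (by simp [hr.le])
    linarith
  set B := (u + M * ε - f x₀) / r with hB
  have hBr : B * r = u + M * ε - f x₀ := div_mul_cancel₀ _ hr.ne'
  have hB0' : 0 ≤ B := by positivity
  have hMb : M ≤ B := by
    apply f.opNorm_le_bound hB0'
    intro v
    rcases eq_or_ne v 0 with rfl | hv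
    · simp
    · have hvn : (0:ℝ) < ‖v‖ := norm_pos_iff.2 hv
      have key2 : ∀ c : E, ‖c‖ = ‖v‖ → r * f c < B * r * ‖v‖ := by
        intro c hc
        have hd : dist (x₀ + (r / ‖v‖) • c) x₀ ≤ r := by
          rw [dist_eq_norm]
          simp only [add_sub_cancel_left, norm_smul]
          rw [hc, Real.norm_eq_abs, abs_of_pos (by positivity),
            div_mul_cancel₀ _ (ne_of_gt hvn)]
        have h6 := key _ hd
        rw [map_add, map_smul, smul_eq_mul] at h6
        have h7 : (r / ‖v‖) * f c < B * r := by rw [hBr]; linarith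
        have h8 := mul_lt_mul_of_pos_right h7 hvn
        rwa [div_mul_eq_mul_div, div_mul_eq_mul_div, mul_comm r (f c),
          mul_div_assoc, div_self (ne_of_gt hvn), mul_one, mul_comm (f c) r] at h8
      have hp := key2 v rfl
      have hn := key2 (-v) (norm_neg v)
      rw [map_neg] at hn
      rw [Real.norm_eq_abs, abs_le]
      constructor <;> nlinarith
  have h3 : f z ≤ f x₀ + M * (r - ε) := by
    have h5 : ‖f z - f x₀‖ ≤ M * ‖z - x₀‖ := by
      rw [← map_sub]; exact f.le_opNorm _
    have h4 : f z - f x₀ ≤ ‖f z - f x₀‖ := le_abs_self _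
    have h6 : ‖z - x₀‖ ≤ r - ε := by
      rw [← dist_eq_norm]; exact Metric.mem_closedBall.1 hz
    have h7 : M * ‖z - x₀‖ ≤ M * (r - ε) := mul_le_mul_of_nonneg_left h6 hM0
    linarith
  have h8 : M * r ≤ u + M * ε - f x₀ := by
    rw [← hBr]; exact mul_le_mul_of_nonneg_right hMb hr.le
  linarith [hfz]

/-- If `Ωₙ` and `Ω` are nonempty bounded open convex subsets of `ℝ^m` and the closures of the
`Ωₙ` converge to the closure of `Ω` in the Hausdorff distance, then every compact subset of `Ω`
is contained in `Ωₙ` for all sufficiently large `n`. -/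
theorem compact_subset_eventually_of_hausdorff_tendsto
    (m : ℕ) (hm : 1 ≤ m)
    (Ωn : ℕ → Set (EuclideanSpace ℝ (Fin m))) (Ω : Set (EuclideanSpace ℝ (Fin m)))
    (hne : ∀ n, (Ωn n).Nonempty) (hbdd : ∀ n, Bornology.IsBounded (Ωn n))
    (hopen : ∀ n, IsOpen (Ωn n)) (hconv : ∀ n, Convex ℝ (Ωn n))
    (hΩne : Ω.Nonempty) (hΩbdd : Bornology.IsBounded Ω)
    (hΩopen : IsOpen Ω) (hΩconv : Convex ℝ Ω)
    (hH : Tendsto (fun n => Metric.hausdorffDist (closure (Ωn n)) (closure Ω)) atTop (nhds 0))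
    (K : Set (EuclideanSpace ℝ (Fin m))) (hK : IsCompact K) (hKΩ : K ⊆ Ω) :
    ∀ᶠ n in atTop, K ⊆ Ωn n := by
  have hΩne' : Ω.Nonempty := hΩne
  obtain ⟨x₀, hx₀⟩ := hΩne
  obtain ⟨r₀, hr₀, hball₀⟩ := Metric.isOpen_iff.1 hΩopen x₀ hx₀
  set r := r₀ / 2 with hrdef
  have hr : 0 < r := by positivity
  have hball : Metric.closedBall x₀ r ⊆ Ω :=
    (Metric.closedBall_subset_ball (by rw [hrdef]; linarith)).trans hball₀
  obtain ⟨δ, hδ, hδsub⟩ := hK.exists_thickening_subset_open hΩopen hKΩ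
  obtain ⟨D₀, hD₀⟩ := hK.isBounded.subset_closedBall x₀
  set D := max D₀ 1 with hDdef
  have hD : (0:ℝ) < D := lt_of_lt_of_le one_pos (le_max_right _ _)
  have hKD : ∀ x ∈ K, dist x x₀ ≤ D := fun x hx =>
    le_trans (Metric.mem_closedBall.1 (hD₀ hx)) (le_max_left _ _)
  set t := δ / (2 * D) with htdef
  have ht : 0 < t := by positivity
  set ε := t * r / (4 * (1 + t)) with hεdef
  have h1t : (0:ℝ) < 1 + t := by linarith
  have hε : 0 < ε := by positivity
  have hεt : ε * (4 * (1 + t)) = t * r := by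
    rw [hεdef]; field_simp
  have hεr4 : ε ≤ r / 4 := by nlinarith
  filter_upwards [hH.eventually_lt_const hε] with n hn
  intro x hx
  set C := closure (Ωn n) with hCdef
  have hCne : C.Nonempty := (hne n).closure
  have hCconv : Convex ℝ C := (hconv n).closure
  have hCcl : IsClosed C := isClosed_closure
  have hfin : EMetric.hausdorffEdist C (closure Ω) ≠ ⊤ :=
    Metric.hausdorffEdist_ne_top_of_nonempty_of_bounded hCne hΩne'.closure
      (hbdd n).closure hΩbdd.closure
  have hnear : ∀ q ∈ closure Ω, Metric.infDist q C < ε := by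
    intro q hq
    calc Metric.infDist q C ≤ Metric.hausdorffDist (closure Ω) C :=
          Metric.infDist_le_hausdorffDist_of_mem hq
            (by rw [EMetric.hausdorffEdist_comm]; exact hfin)
      _ = Metric.hausdorffDist C (closure Ω) := Metric.hausdorffDist_comm
      _ < ε := hn
  have hballC : Metric.closedBall x₀ (r - ε) ⊆ C :=
    aux_closedBall_subset hCconv hCcl hCne hr hε (by linarith)
      (fun q hq => hnear q (subset_closure (hball (Metric.mem_closedBall.2 hq))))
  set y := x + t • (x - x₀) with hydef
  have hyΩ : y ∈ Ω := by
    apply hδsub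
    rw [Metric.mem_thickening_iff]
    refine ⟨x, hx, ?_⟩
    have h1 : dist y x = t * ‖x - x₀‖ := by
      rw [hydef, dist_eq_norm, add_sub_cancel_left, norm_smul, Real.norm_eq_abs,
        abs_of_pos ht]
    have h2 : ‖x - x₀‖ ≤ D := by rw [← dist_eq_norm]; exact hKD x hx
    have h3 : t * D = δ / 2 := by
      rw [htdef]; field_simp
    have h4 : t * ‖x - x₀‖ ≤ δ / 2 := by
      rw [← h3]; exact mul_le_mul_of_nonneg_left h2 ht.le
    rw [h1]; linarith
  obtain ⟨z, hzC, hzy⟩ := (Metric.infDist_lt_iff hCne).1 (hnear y (subset_closure hyΩ))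
  have hball2 : Metric.closedBall x ε ⊆ C := by
    intro x' hx'
    set w := x₀ + t⁻¹ • ((1 + t) • (x' - x) + (y - z)) with hwdef
    have hwC : w ∈ C := by
      apply hballC
      rw [Metric.mem_closedBall, dist_eq_norm, hwdef, add_sub_cancel_left, norm_smul,
        Real.norm_eq_abs, abs_of_pos (by positivity)]
      have h1 : ‖(1 + t) • (x' - x) + (y - z)‖ ≤ (1 + t) * ε + ε := by
        refine le_trans (norm_add_le _ _) (add_le_add ?_ ?_)
        · rw [norm_smul, Real.norm_eq_abs, abs_of_pos h1t]
          exact mul_le_mul_of_nonneg_left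
            (by rw [← dist_eq_norm]; exact Metric.mem_closedBall.1 hx') h1t.le
        · rw [← dist_eq_norm]; exact hzy.le
      have h2 : t⁻¹ * ‖(1 + t) • (x' - x) + (y - z)‖ ≤ t⁻¹ * ((1 + t) * ε + ε) :=
        mul_le_mul_of_nonneg_left h1 (by positivity)
      have h3 : t⁻¹ * ((1 + t) * ε + ε) ≤ r - ε := by
        rw [inv_mul_le_iff₀ ht]
        nlinarith
      linarith
    have hcomb := hCconv hzC hwC (a := 1 / (1 + t)) (b := t / (1 + t))
      (by positivity) (by positivity) (by field_simp)
    have heq : (1 / (1 + t)) • z + (t / (1 + t)) • w = x' := by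
      rw [hwdef, hydef]
      match_scalars <;> field_simp <;> ring
    rwa [heq] at hcomb
  have hx_int : x ∈ interior C :=
    mem_interior.2 ⟨Metric.ball x ε, (Metric.ball_subset_closedBall).trans hball2,
      Metric.isOpen_ball, Metric.mem_ball_self hε⟩
  exact aux_interior_closure_subset (hconv n) (hopen n) (hne n) hx_int
end

section
/- Let m ≥ 1, let Ωₙ (n ∈ ℕ) and Ω be nonempty bounded open convex subsets of ℝ^m, and suppose the Hausdorff distance between the closure of Ωₙ and the closure of Ω tends to 0 as n → ∞. If V ⊆ ℝ^m is an affine subspace with V ∩ Ω ≠ ∅, then Ωₙ ∩ V is nonempty for all sufficiently large n and the Hausdorff distance between closure(Ωₙ ∩ V) and closure(Ω ∩ V) tends to 0 as n → ∞. -/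
open Filter Metric Set
open scoped RealInnerProductSpace

section Aux

variable {E : Type*} [NormedAddCommGroup E] [InnerProductSpace ℝ E]

/-- If every point of the ball `ball x₀ r` is within `ε < r` of a closed convex set `C`, then
the smaller ball `ball x₀ (r - ε)` is contained in `C`. -/
lemma aux_ball_subset_closure [CompleteSpace E] {C : Set E} (hC : Convex ℝ C)
    (hCc : IsClosed C) (hCne : C.Nonempty) {x₀ : E} {r ε : ℝ} (hε : 0 < ε) (hεr : ε < r)
    (h : ∀ y ∈ ball x₀ r, infDist y C < ε) :
    ball x₀ (r - ε) ⊆ C := by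
  intro x hx
  by_contra hxC
  obtain ⟨f, c, hfa, hfx⟩ := geometric_hahn_banach_closed_point hC hCc hxC
  set v := (InnerProductSpace.toDual ℝ E).symm f with hvdef
  have hfv : ∀ a, ⟪v, a⟫ = f a := fun a => InnerProductSpace.toDual_symm_apply
  have hv0 : v ≠ 0 := by
    intro h0
    obtain ⟨a, ha⟩ := hCne
    have h1 : f a = 0 := by rw [← hfv, h0, inner_zero_left]
    have h2 : f x = 0 := by rw [← hfv, h0, inner_zero_left]
    have := hfa a ha
    linarith
  set w := ‖v‖⁻¹ • v with hwdef
  have hw1 : ‖w‖ = 1 := by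
    rw [hwdef, norm_smul, norm_inv, norm_norm, inv_mul_cancel₀ (norm_ne_zero_iff.2 hv0)]
  have hxx₀ : dist x x₀ < r - ε := mem_ball.1 hx
  set ε'' := (ε + (r - dist x x₀)) / 2 with hε''def
  have hε''ε : ε < ε'' := by
    rw [hε''def]; linarith
  have hε''pos : 0 < ε'' := by linarith [hε.le]
  set x' := x + ε'' • w with hx'def
  have hx'x : dist x' x = ε'' := by
    rw [hx'def, dist_eq_norm, add_sub_cancel_left, norm_smul, hw1,
      Real.norm_eq_abs, abs_of_pos hε''pos, mul_one]
  have hx'ball : x' ∈ ball x₀ r := by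
    rw [mem_ball]
    calc dist x' x₀ ≤ dist x' x + dist x x₀ := dist_triangle _ _ _
      _ = ε'' + dist x x₀ := by rw [hx'x]
      _ < r := by rw [hε''def]; linarith
  have hlow : ∀ a ∈ C, ε'' ≤ dist x' a := by
    intro a ha
    have hws : ⟪w, w⟫ = 1 := by
      rw [real_inner_self_eq_norm_sq, hw1]; norm_num
    have hinner : ⟪w, x' - a⟫ = ⟪w, x - a⟫ + ε'' := by
      rw [hx'def]
      have : x + ε'' • w - a = (x - a) + ε'' • w := by abel
      rw [this, inner_add_right, real_inner_smul_right, hws, mul_one]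
    have hfxa : 0 < ⟪w, x - a⟫ := by
      rw [hwdef, real_inner_smul_left, inner_sub_right, hfv, hfv]
      have h1 := hfa a ha
      have h2 : 0 < f x - f a := by linarith
      exact mul_pos (inv_pos.2 (norm_pos_iff.2 hv0)) h2
    calc ε'' ≤ ⟪w, x' - a⟫ := by rw [hinner]; linarith
      _ ≤ ‖w‖ * ‖x' - a‖ := real_inner_le_norm _ _
      _ = dist x' a := by rw [hw1, one_mul, dist_eq_norm]
  have h2 := h x' hx'ball
  obtain ⟨a, haC, hda⟩ := (infDist_lt_iff hCne).1 (lt_trans h2 hε''ε)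
  exact absurd hda (not_lt.2 (hlow a haC))

/-- An open convex set whose closure contains a ball around `x₀` contains `x₀`. -/
lemma aux_mem_of_ball_subset_closure {C : Set E} (hC : Convex ℝ C) (hCo : IsOpen C)
    (hCne : C.Nonempty) {x₀ : E} {ρ : ℝ} (hρ : 0 < ρ) (h : ball x₀ ρ ⊆ closure C) :
    x₀ ∈ C := by
  obtain ⟨p, hp⟩ := hCne
  set δ := ρ / (2 * (‖x₀ - p‖ + 1)) with hδdef
  have hδ : 0 < δ := by positivity
  set y := x₀ + δ • (x₀ - p) with hydef
  have hy : y ∈ ball x₀ ρ := by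
    rw [mem_ball, hydef, dist_eq_norm, add_sub_cancel_left, norm_smul, Real.norm_eq_abs,
      abs_of_pos hδ, hδdef, div_mul_eq_mul_div, div_lt_iff₀ (by positivity)]
    nlinarith [norm_nonneg (x₀ - p)]
  have h1δ : (0:ℝ) < 1 + δ := by linarith
  have hcombo : (δ / (1 + δ)) • p + (1 / (1 + δ)) • y ∈ interior C := by
    apply hC.combo_interior_closure_mem_interior (by rwa [hCo.interior_eq]) (h hy)
      (by positivity) (by positivity)
    field_simp
    ring
  have heq : (δ / (1 + δ)) • p + (1 / (1 + δ)) • y = x₀ := by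
    rw [hydef]
    match_scalars <;> (field_simp; try ring)
  rw [heq, hCo.interior_eq] at hcombo
  exact hcombo

/-- Closure of an open convex set intersected with an affine subspace through an interior
point. -/
lemma aux_closure_inter {C : Set E} (hC : Convex ℝ C) (hCo : IsOpen C)
    {V : AffineSubspace ℝ E} {x₀ : E} (hx₀C : x₀ ∈ C) (hx₀V : x₀ ∈ V) :
    closure C ∩ (V : Set E) ⊆ closure (C ∩ (V : Set E)) := by
  rintro z ⟨hzC, hzV⟩
  rw [Metric.mem_closure_iff]
  intro δ hδ
  set t := min 1 (δ / (2 * (‖x₀ - z‖ + 1))) with htdef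
  have ht0 : 0 < t := lt_min one_pos (by positivity)
  have ht1 : t ≤ 1 := min_le_left _ _
  refine ⟨t • x₀ + (1 - t) • z, ⟨?_, ?_⟩, ?_⟩
  · have := hC.combo_interior_closure_mem_interior (x := x₀) (y := z) (a := t) (b := 1 - t)
      (by rwa [hCo.interior_eq]) hzC ht0 (by linarith) (by ring)
    rwa [hCo.interior_eq] at this
  · rw [SetLike.mem_coe, ← AffineSubspace.vsub_right_mem_direction_iff_mem hx₀V]
    have heq : t • x₀ + (1 - t) • z -ᵥ x₀ = (1 - t) • (z - x₀) := by
      rw [vsub_eq_sub]; match_scalars <;> ring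
    rw [heq]
    exact Submodule.smul_mem _ _ (AffineSubspace.vsub_mem_direction hzV hx₀V)
  · have heq : dist z (t • x₀ + (1 - t) • z) = t * ‖x₀ - z‖ := by
      rw [dist_eq_norm]
      have : z - (t • x₀ + (1 - t) • z) = t • (z - x₀) := by
        match_scalars <;> ring
      rw [this, norm_smul, Real.norm_eq_abs, abs_of_pos ht0, norm_sub_rev]
    rw [heq]
    have ht2 : t ≤ δ / (2 * (‖x₀ - z‖ + 1)) := min_le_right _ _
    calc t * ‖x₀ - z‖ ≤ δ / (2 * (‖x₀ - z‖ + 1)) * ‖x₀ - z‖ :=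
          mul_le_mul_of_nonneg_right ht2 (norm_nonneg _)
      _ < δ := by
          rw [div_mul_eq_mul_div, div_lt_iff₀ (by positivity)]
          nlinarith [norm_nonneg (x₀ - z)]

/-- Quantitative lemma: if `x ∈ V`, `y ∈ T` with `dist x y ≤ ε`, `T` is convex and contains the
closed ball of radius `s` around a point `x₀ ∈ V`, then there is `z ∈ T ∩ V` close to `x`. -/
lemma aux_exists_near_inter [FiniteDimensional ℝ E] {V : AffineSubspace ℝ E} {x₀ : E}
    (hx₀ : x₀ ∈ V) {T : Set E} (hT : Convex ℝ T) {s ε : ℝ} (hs : 0 < s) (hε : 0 ≤ ε)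
    (hball : closedBall x₀ s ⊆ T) {x y : E} (hxV : x ∈ V)
    (hyT : y ∈ T) (hxy : dist x y ≤ ε) :
    ∃ z ∈ T ∩ (V : Set E), dist x z ≤ ε + ε / s * (dist y x₀ + s) := by
  set W := V.direction with hWdef
  set u : E := (Submodule.orthogonalProjectionOnto Wᗮ (y - x₀) : E) with hudef
  have huW : u ∈ Wᗮ := (Submodule.orthogonalProjectionOnto Wᗮ (y - x₀)).2
  have hyu : (y - x₀) - u ∈ W := by
    have h1 := Submodule.sub_starProjection_mem_orthogonal (K := Wᗮ) (y - x₀)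
    rwa [Submodule.orthogonal_orthogonal] at h1
  have hu_norm : ‖u‖ ≤ ε := by
    have hxx₀ : x - x₀ ∈ W := by
      have := AffineSubspace.vsub_mem_direction hxV hx₀
      rwa [vsub_eq_sub] at this
    have h0 : Submodule.orthogonalProjectionOnto Wᗮ (x - x₀) = 0 :=
      Submodule.orthogonalProjectionOnto_apply_of_mem_orthogonal
        (Submodule.le_orthogonal_orthogonal W hxx₀)
    have hsplit : y - x₀ = (y - x) + (x - x₀) := by abel
    have h1 : u = (Submodule.orthogonalProjectionOnto Wᗮ (y - x) : E) := by
      rw [hudef, hsplit, map_add, h0, add_zero]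
    rw [h1]
    calc ‖(Submodule.orthogonalProjectionOnto Wᗮ (y - x) : E)‖
        ≤ ‖Submodule.orthogonalProjectionOnto Wᗮ‖ * ‖y - x‖ :=
          (Submodule.orthogonalProjectionOnto Wᗮ).le_opNorm _
      _ ≤ 1 * ‖y - x‖ :=
          mul_le_mul_of_nonneg_right (Submodule.orthogonalProjectionOnto_norm_le _) (norm_nonneg _)
      _ = dist x y := by rw [one_mul, dist_eq_norm, norm_sub_rev]
      _ ≤ ε := hxy
  set t := ‖u‖ / (‖u‖ + s) with htdef
  set q := x₀ - (s / ‖u‖) • u with hqdef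
  set z := (1 - t) • y + t • q with hzdef
  have hus : 0 < ‖u‖ + s := by positivity
  have ht0 : 0 ≤ t := by positivity
  have ht1 : t ≤ 1 := by
    rw [htdef, div_le_one hus]; linarith
  have hts : t ≤ ε / s := by
    calc t ≤ ‖u‖ / s := by
          rw [htdef]
          exact div_le_div_of_nonneg_left (norm_nonneg u) hs (by linarith [norm_nonneg u])
      _ ≤ ε / s := by gcongr
  have hqball : q ∈ closedBall x₀ s := by
    rw [mem_closedBall, hqdef, dist_eq_norm]
    have : x₀ - (s / ‖u‖) • u - x₀ = -((s / ‖u‖) • u) := by abel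
    rw [this, norm_neg, norm_smul, Real.norm_eq_abs, abs_of_nonneg (by positivity)]
    rcases eq_or_ne u 0 with hu | hu
    · simp [hu, hs.le]
    · rw [div_mul_cancel₀ _ (norm_ne_zero_iff.2 hu)]
  have hzT : z ∈ T := hT hyT (hball hqball) (by linarith) ht0 (by ring)
  have hzV : z ∈ V := by
    rw [← AffineSubspace.vsub_right_mem_direction_iff_mem hx₀ z, vsub_eq_sub]
    set c := (1 - t) - t * (s / ‖u‖) with hcdef
    have hcu : c • u = 0 := by
      rcases eq_or_ne u 0 with hu | hu
      · rw [hu, smul_zero]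
      · have hune : ‖u‖ ≠ 0 := norm_ne_zero_iff.2 hu
        have : c = 0 := by
          rw [hcdef, htdef]
          field_simp
          ring
        rw [this, zero_smul]
    have heq : z - x₀ = (1 - t) • ((y - x₀) - u) + c • u := by
      rw [hzdef, hqdef, hcdef]
      match_scalars <;> ring
    rw [heq, hcu, add_zero]
    exact Submodule.smul_mem _ _ hyu
  refine ⟨z, ⟨hzT, hzV⟩, ?_⟩
  have hyz : dist y z = t * ‖y - q‖ := by
    rw [dist_eq_norm]
    have : y - z = t • (y - q) := by rw [hzdef]; match_scalars <;> ring
    rw [this, norm_smul, Real.norm_eq_abs, abs_of_nonneg ht0]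
  have hyq : ‖y - q‖ ≤ dist y x₀ + s := by
    calc ‖y - q‖ = dist y q := (dist_eq_norm _ _).symm
      _ ≤ dist y x₀ + dist x₀ q := dist_triangle _ _ _
      _ ≤ dist y x₀ + s := by
          have := mem_closedBall.1 hqball
          rw [dist_comm x₀ q]; linarith
  calc dist x z ≤ dist x y + dist y z := dist_triangle _ _ _
    _ ≤ ε + t * ‖y - q‖ := by rw [hyz] at *; linarith
    _ ≤ ε + (ε / s) * (dist y x₀ + s) := by
        have h1 : t * ‖y - q‖ ≤ (ε / s) * (dist y x₀ + s) :=
          mul_le_mul hts hyq (norm_nonneg _) (by positivity)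
        linarith

end Aux

open Filter

/-- If `Ωₙ` and `Ω` are nonempty bounded open convex subsets of `ℝ^m` whose closures converge
in the Hausdorff distance, and `V` is an affine subspace of `ℝ^m` meeting `Ω`, then `Ωₙ ∩ V` is
nonempty for all sufficiently large `n` and the closures of `Ωₙ ∩ V` converge to the closure of
`Ω ∩ V` in the Hausdorff distance. -/
theorem hausdorff_tendsto_inter_affineSubspace
    (m : ℕ) (hm : 1 ≤ m)
    (Ωn : ℕ → Set (EuclideanSpace ℝ (Fin m))) (Ω : Set (EuclideanSpace ℝ (Fin m)))
    (hne : ∀ n, (Ωn n).Nonempty) (hbdd : ∀ n, Bornology.IsBounded (Ωn n))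
    (hopen : ∀ n, IsOpen (Ωn n)) (hconv : ∀ n, Convex ℝ (Ωn n))
    (hΩne : Ω.Nonempty) (hΩbdd : Bornology.IsBounded Ω)
    (hΩopen : IsOpen Ω) (hΩconv : Convex ℝ Ω)
    (hH : Tendsto (fun n => Metric.hausdorffDist (closure (Ωn n)) (closure Ω)) atTop (nhds 0))
    (V : AffineSubspace ℝ (EuclideanSpace ℝ (Fin m)))
    (hint : ((V : Set (EuclideanSpace ℝ (Fin m))) ∩ Ω).Nonempty) :
    (∀ᶠ n in atTop, (Ωn n ∩ (V : Set (EuclideanSpace ℝ (Fin m)))).Nonempty) ∧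
      Tendsto
        (fun n => Metric.hausdorffDist
          (closure (Ωn n ∩ (V : Set (EuclideanSpace ℝ (Fin m)))))
          (closure (Ω ∩ (V : Set (EuclideanSpace ℝ (Fin m))))))
        atTop (nhds 0) := by
  classical
  obtain ⟨x₀, hx₀V, hx₀Ω⟩ := hint
  obtain ⟨r₀, hr₀, hball₀⟩ := Metric.isOpen_iff.1 hΩopen x₀ hx₀Ω
  set r := min r₀ 1 with hrdef
  have hr : 0 < r := lt_min hr₀ one_pos
  have hball : Metric.ball x₀ r ⊆ Ω := (Metric.ball_subset_ball (min_le_left _ _)).trans hball₀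
  have hr1 : r ≤ 1 := min_le_right _ _
  obtain ⟨M₀, hM₀⟩ := hΩbdd.subset_closedBall x₀
  set M := max M₀ 0 with hMdef
  have hM0 : 0 ≤ M := le_max_right _ _
  have hMsub : Ω ⊆ Metric.closedBall x₀ M :=
    hM₀.trans (Metric.closedBall_subset_closedBall (le_max_left _ _))
  have hMclosure : closure Ω ⊆ Metric.closedBall x₀ M :=
    closure_minimal hMsub Metric.isClosed_closedBall
  set K := 1 + 2 / r * (M + 1 + r) with hKdef
  have hK1 : 1 ≤ K := by
    rw [hKdef]
    have : 0 ≤ 2 / r * (M + 1 + r) := by positivity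
    linarith
  have hKpos : 0 < K := lt_of_lt_of_le one_pos hK1
  have hfin : ∀ n, EMetric.hausdorffEdist (closure (Ωn n)) (closure Ω) ≠ ⊤ := fun n =>
    Metric.hausdorffEdist_ne_top_of_nonempty_of_bounded (hne n).closure hΩne.closure
      (hbdd n).closure hΩbdd.closure
  have hfin' : ∀ n, EMetric.hausdorffEdist (closure Ω) (closure (Ωn n)) ≠ ⊤ := fun n => by
    show Metric.hausdorffEDist _ _ ≠ ⊤; rw [Metric.hausdorffEDist_comm]; exact hfin n
  have key : ∀ ε : ℝ, 0 < ε → ε ≤ min 1 (r / 2) → ∀ n,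
      Metric.hausdorffDist (closure (Ωn n)) (closure Ω) < ε →
      x₀ ∈ Ωn n ∧
        Metric.hausdorffDist (closure (Ωn n ∩ (V : Set (EuclideanSpace ℝ (Fin m)))))
          (closure (Ω ∩ (V : Set (EuclideanSpace ℝ (Fin m))))) ≤ ε * K := by
    intro ε hε hεle n hn
    have hε1 : ε ≤ 1 := hεle.trans (min_le_left _ _)
    have hεr : ε ≤ r / 2 := hεle.trans (min_le_right _ _)
    have hεltr : ε < r := by linarith
    -- the slightly smaller ball lies in `closure (Ωn n)`
    have hF1 : Metric.ball x₀ (r - ε) ⊆ closure (Ωn n) := by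
      apply aux_ball_subset_closure ((hconv n).closure) isClosed_closure (hne n).closure hε hεltr
      intro y hy
      have hyΩ : y ∈ closure Ω := subset_closure (hball hy)
      calc Metric.infDist y (closure (Ωn n))
          ≤ Metric.hausdorffDist (closure Ω) (closure (Ωn n)) :=
            Metric.infDist_le_hausdorffDist_of_mem hyΩ (hfin' n)
        _ = Metric.hausdorffDist (closure (Ωn n)) (closure Ω) := Metric.hausdorffDist_comm
        _ < ε := hn
    have hx₀n : x₀ ∈ Ωn n :=
      aux_mem_of_ball_subset_closure (hconv n) (hopen n) (hne n)
        (show (0:ℝ) < r - ε by linarith) hF1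
    refine ⟨hx₀n, ?_⟩
    rw [Metric.hausdorffDist_closure]
    apply Metric.hausdorffDist_le_of_infDist (by positivity)
    · -- from Ωn n ∩ V to Ω ∩ V
      rintro x ⟨hxn, hxV⟩
      have h1 : Metric.infDist x (closure Ω) < ε :=
        lt_of_le_of_lt (Metric.infDist_le_hausdorffDist_of_mem (subset_closure hxn) (hfin n)) hn
      rw [Metric.infDist_closure] at h1
      obtain ⟨y, hyΩ, hxy⟩ := (Metric.infDist_lt_iff hΩne).1 h1
      have hcb : Metric.closedBall x₀ (r / 2) ⊆ Ω := fun w hw =>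
        hball (Metric.mem_ball.2 (lt_of_le_of_lt (Metric.mem_closedBall.1 hw) (by linarith)))
      obtain ⟨z, hzmem, hzd⟩ :=
        aux_exists_near_inter hx₀V hΩconv (half_pos hr) hε.le hcb hxV hyΩ hxy.le
      have hy0 : dist y x₀ ≤ M := Metric.mem_closedBall.1 (hMsub hyΩ)
      have hrne : r ≠ 0 := ne_of_gt hr
      have e1 : ε / (r / 2) = 2 / r * ε := by field_simp
      have h2 : ε / (r / 2) * (dist y x₀ + r / 2) ≤ 2 / r * ε * (M + 1 + r) := by
        rw [e1]
        apply mul_le_mul_of_nonneg_left _ (by positivity)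
        linarith
      calc Metric.infDist x (Ω ∩ (V : Set (EuclideanSpace ℝ (Fin m))))
          ≤ dist x z := Metric.infDist_le_dist_of_mem hzmem
        _ ≤ ε + ε / (r / 2) * (dist y x₀ + r / 2) := hzd
        _ ≤ ε + 2 / r * ε * (M + 1 + r) := by linarith
        _ = ε * K := by rw [hKdef]; ring
    · -- from Ω ∩ V to Ωn n ∩ V
      rintro x ⟨hxΩ, hxV⟩
      have h1 : Metric.infDist x (closure (Ωn n)) < ε :=
        lt_of_le_of_lt
          (le_trans (Metric.infDist_le_hausdorffDist_of_mem (subset_closure hxΩ) (hfin' n))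
            (le_of_eq Metric.hausdorffDist_comm)) hn
      obtain ⟨y, hyn, hxy⟩ := (Metric.infDist_lt_iff (hne n).closure).1 h1
      have hyd : dist y x₀ ≤ M + 1 := by
        have h2 : Metric.infDist y (closure Ω) < ε :=
          lt_of_le_of_lt (Metric.infDist_le_hausdorffDist_of_mem hyn (hfin n)) hn
        obtain ⟨p, hp, hyp⟩ := (Metric.infDist_lt_iff hΩne.closure).1 h2
        have hpM : dist p x₀ ≤ M := Metric.mem_closedBall.1 (hMclosure hp)
        calc dist y x₀ ≤ dist y p + dist p x₀ := dist_triangle _ _ _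
          _ ≤ M + 1 := by linarith
      have hrε : (0:ℝ) < r - ε := by linarith
      have hcb : Metric.closedBall x₀ (r - ε) ⊆ closure (Ωn n) := by
        rw [← closure_ball x₀ (ne_of_gt hrε)]
        calc closure (Metric.ball x₀ (r - ε)) ⊆ closure (closure (Ωn n)) := closure_mono hF1
          _ = closure (Ωn n) := closure_closure
      obtain ⟨z, hzmem, hzd⟩ :=
        aux_exists_near_inter hx₀V ((hconv n).closure) hrε hε.le hcb hxV hyn hxy.le
      have hz2 : z ∈ closure (Ωn n ∩ (V : Set (EuclideanSpace ℝ (Fin m)))) :=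
        aux_closure_inter (hconv n) (hopen n) hx₀n hx₀V hzmem
      have e1 : ε / (r - ε) ≤ ε / (r / 2) :=
        div_le_div_of_nonneg_left hε.le (by linarith) (by linarith)
      have e2 : ε / (r / 2) = 2 / r * ε := by
        have hrne : r ≠ 0 := ne_of_gt hr
        field_simp
      have h2 : ε / (r - ε) * (dist y x₀ + (r - ε)) ≤ 2 / r * ε * (M + 1 + r) := by
        apply mul_le_mul (by rw [← e2]; exact e1) (by linarith)
          (add_nonneg dist_nonneg (by linarith)) (by positivity)
      calc Metric.infDist x (Ωn n ∩ (V : Set (EuclideanSpace ℝ (Fin m))))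
          ≤ dist x z := by
            rw [← Metric.infDist_closure]
            exact Metric.infDist_le_dist_of_mem hz2
        _ ≤ ε + ε / (r - ε) * (dist y x₀ + (r - ε)) := hzd
        _ ≤ ε + 2 / r * ε * (M + 1 + r) := by linarith
        _ = ε * K := by rw [hKdef]; ring
  constructor
  · have hδ : (0:ℝ) < min 1 (r / 2) := lt_min one_pos (by positivity)
    have hev := hH.eventually (gt_mem_nhds hδ)
    exact hev.mono fun n hn => ⟨x₀, (key _ hδ le_rfl n hn).1, hx₀V⟩
  · rw [NormedAddCommGroup.tendsto_nhds_zero]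
    intro ε' hε'
    set ε := min (min 1 (r / 2)) (ε' / (2 * K)) with hεdef
    have hεpos : 0 < ε := lt_min (lt_min one_pos (by positivity)) (by positivity)
    have hev := hH.eventually (gt_mem_nhds hεpos)
    refine hev.mono fun n hn => ?_
    have h2 := (key ε hεpos (min_le_left _ _) n hn).2
    have h3 : ε * K ≤ ε' / 2 := by
      have hle : ε ≤ ε' / (2 * K) := min_le_right _ _
      calc ε * K ≤ ε' / (2 * K) * K := mul_le_mul_of_nonneg_right hle hKpos.le
        _ = ε' / 2 := by field_simp
    rw [Real.norm_eq_abs, abs_of_nonneg Metric.hausdorffDist_nonneg]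
    exact lt_of_le_of_lt h2 (lt_of_le_of_lt h3 (by linarith))
end
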